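/- Let f₁, f₂ be modular forms of weight 2k₁, 2k₂ with Fourier expansions f₁ = ∑_{m≥1}a_m q^m, f₂ = ∑_{n≥1}b_n q^n (vanishing constant terms), with coefficients of polynomial growth. Then for Re(s₁), Re(s₂) sufficiently large, the double Mellin transform Λ(θ_{f₁},θ_{f₂};s₁,s₂) := ∫_{0≤t₁≤t₂≤∞} f₁(it₁)f₂(it₂)t₁^{s₁−1}t₂^{s₂−1}dt₁dt₂ equals (2π)^{−s₁−s₂}Γ(s₁+s₂)·∑_{m,n≥1} a_m b_n ∫₀¹ x^{s₁−1}(mx+n)^{−(s₁+s₂)}dx. -/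

import Mathlib

open Complex Real MeasureTheory
open Set

lemma integrableOn_cpow_exp {s : ℂ} (hs : 0 < s.re) {μ : ℝ} (hμ : 0 < μ) :
    IntegrableOn (fun t : ℝ => (t:ℂ)^(s-1) * Complex.exp (↑(-(μ*t)) : ℂ)) (Set.Ioi 0) := by
  have h := Complex.GammaIntegral_convergent hs
  rw [← mul_zero μ, ← integrableOn_Ioi_comp_mul_left_iff _ _ hμ] at h
  refine (IntegrableOn.congr_fun (h.const_mul ((μ:ℂ) ^ (s-1))⁻¹)
      (fun t (ht : 0 < t) => ?_) measurableSet_Ioi)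
  have hne : (μ:ℂ) ^ (s-1) ≠ 0 := by
    rw [Ne, cpow_eq_zero_iff, not_and_or]
    exact Or.inl (ofReal_ne_zero.mpr hμ.ne')
  rw [ofReal_mul, mul_cpow_ofReal_nonneg hμ.le ht.le]
  push_cast
  field_simp

lemma norm_cpow_exp {s : ℂ} {t : ℝ} (ht : 0 < t) (y : ℝ) :
    ‖(t:ℂ)^s * Complex.exp (↑y : ℂ)‖ = t^(s.re) * rexp y := by
  rw [norm_mul, norm_cpow_eq_rpow_re_of_pos ht,
    Complex.norm_exp, ofReal_re]

lemma integrableOn_rpow_exp {σ μ : ℝ} (hσ : 0 < σ) (hμ : 0 < μ) :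
    IntegrableOn (fun t : ℝ => t^(σ-1) * rexp (-(μ*t))) (Set.Ioi 0) := by
  refine IntegrableOn.congr_fun ((integrableOn_cpow_exp (s := (σ:ℂ)) (by simpa using hσ) hμ).norm)
    (fun t (ht : 0 < t) => ?_) measurableSet_Ioi
  rw [norm_cpow_exp ht]
  norm_num

lemma setIntegral_norm_cpow_exp_le {s : ℂ} (hs : 0 < s.re) {μ : ℝ} (hμ : 0 < μ)
    {S : Set ℝ} (hS : MeasurableSet S) (hsub : S ⊆ Set.Ioi 0) :
    ∫ t in S, ‖(t:ℂ)^(s-1) * Complex.exp (↑(-(μ*t)) : ℂ)‖ ≤ (1/μ)^s.re * Real.Gamma s.re := by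
  have hval : ∫ t in Set.Ioi (0:ℝ), ‖(t:ℂ)^(s-1) * Complex.exp (↑(-(μ*t)) : ℂ)‖
      = (1/μ)^s.re * Real.Gamma s.re := by
    rw [← Real.integral_rpow_mul_exp_neg_mul_Ioi hs hμ]
    refine setIntegral_congr_fun measurableSet_Ioi (fun t ht => ?_)
    rw [norm_cpow_exp ht, sub_re, one_re]
  rw [← hval]
  refine setIntegral_mono_set (integrableOn_cpow_exp hs hμ).norm ?_ (HasSubset.Subset.eventuallyLE hsub)
  filter_upwards with t using norm_nonneg _

lemma P1 {s₁ : ℂ} {M t₂ : ℝ} (ht₂ : 0 < t₂) :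
    ∫ t₁ in Ioc (0:ℝ) t₂, Complex.exp (↑(-(M * t₁)) : ℂ) * (t₁:ℂ)^(s₁-1) =
      (t₂:ℂ)^s₁ * ∫ x in (0:ℝ)..1, (x:ℂ)^(s₁-1) * Complex.exp (↑(-(M * (x * t₂))) : ℂ) := by
  have h0 : (0:ℝ) ≤ t₂ := ht₂.le
  have hne : (t₂:ℂ) ≠ 0 := ofReal_ne_zero.mpr ht₂.ne'
  rw [← intervalIntegral.integral_of_le h0]
  have key := intervalIntegral.integral_comp_mul_right
    (a := 0) (b := 1) (fun t₁ : ℝ => Complex.exp (↑(-(M * t₁)) : ℂ) * (t₁:ℂ)^(s₁-1)) ht₂.ne'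
  rw [zero_mul, one_mul] at key
  have key2 : (∫ x in (0:ℝ)..t₂, Complex.exp (↑(-(M * x)) : ℂ) * (x:ℂ)^(s₁-1))
      = t₂ • ∫ x in (0:ℝ)..1, Complex.exp (↑(-(M * (x * t₂))) : ℂ) * ((x*t₂ : ℝ):ℂ)^(s₁-1) := by
    rw [key, ← smul_assoc, smul_eq_mul, mul_inv_cancel₀ ht₂.ne', one_smul]
  rw [key2]
  have congr2 : (∫ x in (0:ℝ)..1, Complex.exp (↑(-(M * (x * t₂))) : ℂ) * ((x*t₂ : ℝ):ℂ)^(s₁-1))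
      = (t₂:ℂ)^(s₁-1) * ∫ x in (0:ℝ)..1, (x:ℂ)^(s₁-1) * Complex.exp (↑(-(M * (x * t₂))) : ℂ) := by
    rw [← intervalIntegral.integral_const_mul]
    refine intervalIntegral.integral_congr (fun x hx => ?_)
    rw [uIcc_of_le zero_le_one] at hx
    rw [ofReal_mul, mul_cpow_ofReal_nonneg hx.1 h0]
    ring
  rw [congr2, Complex.real_smul, ← mul_assoc]
  congr 1
  conv_rhs => rw [show s₁ = 1 + (s₁-1) by ring]
  rw [cpow_add _ _ hne, cpow_one]

lemma per_term {s₁ s₂ : ℂ} (h₁ : 1 < s₁.re) (h₂ : 1 < s₂.re) {m n : ℝ} (hm : 0 < m) (hn : 0 < n) :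
    (∫ t₂ in Ioi (0:ℝ),
      (∫ t₁ in Ioc (0:ℝ) t₂, Complex.exp (↑(-(2*π*m*t₁)):ℂ) * (t₁:ℂ)^(s₁-1)) *
        (Complex.exp (↑(-(2*π*n*t₂)):ℂ) * (t₂:ℂ)^(s₂-1)))
    = (2*(π:ℂ))^(-s₁-s₂) * Complex.Gamma (s₁+s₂) *
        ∫ x in (0:ℝ)..1, (x:ℂ)^(s₁-1) * ((m*x+n : ℝ):ℂ)^(-(s₁+s₂)) := by
  have hs : 0 < (s₁+s₂).re := by rw [add_re]; linarith
  have pi2 : (0:ℝ) < 2*π := by positivity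
  -- Step 1: rewrite integrand
  have step1 : ∀ t ∈ Ioi (0:ℝ),
      (∫ t₁ in Ioc (0:ℝ) t, Complex.exp (↑(-(2*π*m*t₁)):ℂ) * (t₁:ℂ)^(s₁-1)) *
        (Complex.exp (↑(-(2*π*n*t)):ℂ) * (t:ℂ)^(s₂-1))
      = ∫ x in Ioc (0:ℝ) 1,
          (t:ℂ)^(s₁+s₂-1) * ((x:ℂ)^(s₁-1) * Complex.exp (↑(-(2*π*(m*x+n)*t)):ℂ)) := by
    intro t ht
    rw [mem_Ioi] at ht
    have hne : (t:ℂ) ≠ 0 := ofReal_ne_zero.mpr ht.ne'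
    rw [P1 (M := 2*π*m) ht, intervalIntegral.integral_of_le zero_le_one]
    have : ((t:ℂ)^s₁ * ∫ x in Ioc (0:ℝ) 1, (x:ℂ)^(s₁-1) * Complex.exp (↑(-(2*π*m*(x*t))):ℂ)) *
        (Complex.exp (↑(-(2*π*n*t)):ℂ) * (t:ℂ)^(s₂-1))
        = ((t:ℂ)^s₁ * (t:ℂ)^(s₂-1) * Complex.exp (↑(-(2*π*n*t)):ℂ)) *
          ∫ x in Ioc (0:ℝ) 1, (x:ℂ)^(s₁-1) * Complex.exp (↑(-(2*π*m*(x*t))):ℂ) := by ring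
    rw [this, ← MeasureTheory.integral_const_mul]
    refine setIntegral_congr_fun measurableSet_Ioc (fun x hx => ?_)
    rw [← cpow_add _ _ hne, show s₁ + (s₂ - 1) = s₁ + s₂ - 1 by ring,
      ← Complex.ofReal_exp, ← Complex.ofReal_exp, ← Complex.ofReal_exp]
    have hexp : rexp (-(2*π*(m*x+n)*t)) = rexp (-(2*π*n*t)) * rexp (-(2*π*m*(x*t))) := by
      rw [← Real.exp_add]; ring_nf
    rw [hexp, ofReal_mul]
    ring
  rw [setIntegral_congr_fun measurableSet_Ioi step1]
  -- Step 2: swap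
  have swap : (∫ t in Ioi (0:ℝ), ∫ x in Ioc (0:ℝ) 1,
        (t:ℂ)^(s₁+s₂-1) * ((x:ℂ)^(s₁-1) * Complex.exp (↑(-(2*π*(m*x+n)*t)):ℂ)))
      = ∫ x in Ioc (0:ℝ) 1, ∫ t in Ioi (0:ℝ),
        (t:ℂ)^(s₁+s₂-1) * ((x:ℂ)^(s₁-1) * Complex.exp (↑(-(2*π*(m*x+n)*t)):ℂ)) := by
    have hσ : 0 < (s₁+s₂).re - 1 := by rw [add_re]; linarith
    have hσ₁ : 0 < s₁.re - 1 := by linarith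
    have hcont : Continuous (Function.uncurry (fun (t x : ℝ) =>
        (t:ℂ)^(s₁+s₂-1) * ((x:ℂ)^(s₁-1) * Complex.exp (↑(-(2*π*(m*x+n)*t)):ℂ)))) := by
      apply Continuous.mul
      · exact (Complex.continuous_ofReal_cpow_const (by rw [sub_re, add_re, one_re]; linarith)).comp
          continuous_fst
      · apply Continuous.mul
        · exact (Complex.continuous_ofReal_cpow_const (by rw [sub_re, one_re]; linarith)).comp
            continuous_snd
        · exact Complex.continuous_exp.comp (Complex.continuous_ofReal.comp (by fun_prop))
    have hmeas := hcont.aestronglyMeasurable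
      (μ := ((volume.restrict (Ioi (0:ℝ))).prod (volume.restrict (Ioc (0:ℝ) 1))))
    have hK : IntegrableOn (fun x : ℝ => x^(s₁.re-1)) (Ioc (0:ℝ) 1) := by
      exact (intervalIntegrable_iff_integrableOn_Ioc_of_le zero_le_one).mp
        (intervalIntegral.intervalIntegrable_rpow' (by linarith))
    set K : ℝ := ∫ x in Ioc (0:ℝ) 1, x^(s₁.re-1) with hKdef
    have hnorm : ∀ t ∈ Ioi (0:ℝ), ∀ x ∈ Ioc (0:ℝ) 1,
        ‖(t:ℂ)^(s₁+s₂-1) * ((x:ℂ)^(s₁-1) * Complex.exp (↑(-(2*π*(m*x+n)*t)):ℂ))‖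
        = t^((s₁+s₂).re-1) * (x^(s₁.re-1) * rexp (-(2*π*(m*x+n)*t))) := by
      intro t ht x hx
      rw [mem_Ioi] at ht
      rw [norm_mul, norm_mul,
        norm_cpow_eq_rpow_re_of_pos ht, norm_cpow_eq_rpow_re_of_pos hx.1, Complex.norm_exp,
        ofReal_re, sub_re, one_re, sub_re, one_re]
    have hintg : Integrable (Function.uncurry (fun (t x : ℝ) =>
        (t:ℂ)^(s₁+s₂-1) * ((x:ℂ)^(s₁-1) * Complex.exp (↑(-(2*π*(m*x+n)*t)):ℂ))))
        (((volume.restrict (Ioi (0:ℝ))).prod (volume.restrict (Ioc (0:ℝ) 1)))) := by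
      rw [MeasureTheory.integrable_prod_iff hmeas]
      constructor
      · filter_upwards with t
        exact ((hcont.comp (Continuous.prodMk_right t)).integrableOn_Ioc)
      · have hdom : Integrable (fun t : ℝ => (t^((s₁+s₂).re-1) * rexp (-(2*π*n*t))) * K)
            (volume.restrict (Ioi (0:ℝ))) := by
          have := (integrableOn_rpow_exp (σ := (s₁+s₂).re) (μ := 2*π*n) (by linarith)
            (by positivity)).mul_const K
          simpa [sub_sub_cancel] using this
        refine Integrable.mono' hdom (hmeas.norm.integral_prod_right') ?_
        filter_upwards [ae_restrict_mem measurableSet_Ioi] with t ht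
        rw [Real.norm_eq_abs, _root_.abs_of_nonneg (integral_nonneg (fun x => norm_nonneg _))]
        have hle : ∀ x ∈ Ioc (0:ℝ) 1,
            ‖(t:ℂ)^(s₁+s₂-1) * ((x:ℂ)^(s₁-1) * Complex.exp (↑(-(2*π*(m*x+n)*t)):ℂ))‖
            ≤ (t^((s₁+s₂).re-1) * rexp (-(2*π*n*t))) * x^(s₁.re-1) := by
          intro x hx
          rw [hnorm t ht x hx]
          rw [mem_Ioi] at ht
          have hexp : rexp (-(2*π*(m*x+n)*t)) ≤ rexp (-(2*π*n*t)) := by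
            apply Real.exp_le_exp.mpr
            nlinarith [mul_pos pi2 (mul_pos (mul_pos hm hx.1) ht)]
          have h1 : (0:ℝ) ≤ t^((s₁+s₂).re-1) := Real.rpow_nonneg ht.le _
          have h2 : (0:ℝ) ≤ x^(s₁.re-1) := Real.rpow_nonneg hx.1.le _
          calc t^((s₁+s₂).re-1) * (x^(s₁.re-1) * rexp (-(2*π*(m*x+n)*t)))
              ≤ t^((s₁+s₂).re-1) * (x^(s₁.re-1) * rexp (-(2*π*n*t))) := by
                apply mul_le_mul_of_nonneg_left _ h1
                exact mul_le_mul_of_nonneg_left hexp h2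
            _ = (t^((s₁+s₂).re-1) * rexp (-(2*π*n*t))) * x^(s₁.re-1) := by ring
        calc (∫ x in Ioc (0:ℝ) 1,
              ‖(t:ℂ)^(s₁+s₂-1) * ((x:ℂ)^(s₁-1) * Complex.exp (↑(-(2*π*(m*x+n)*t)):ℂ))‖)
            ≤ ∫ x in Ioc (0:ℝ) 1, (t^((s₁+s₂).re-1) * rexp (-(2*π*n*t))) * x^(s₁.re-1) := by
              refine setIntegral_mono_on ?_ (hK.const_mul _) measurableSet_Ioc hle
              exact ((hcont.comp (Continuous.prodMk_right t)).integrableOn_Ioc).norm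
          _ = (t^((s₁+s₂).re-1) * rexp (-(2*π*n*t))) * K := by
              rw [MeasureTheory.integral_const_mul]
    exact MeasureTheory.integral_integral_swap hintg
  rw [swap]
  -- Step 3: evaluate inner integral
  have step3 : ∀ x ∈ Ioc (0:ℝ) 1,
      (∫ t in Ioi (0:ℝ), (t:ℂ)^(s₁+s₂-1) * ((x:ℂ)^(s₁-1) * Complex.exp (↑(-(2*π*(m*x+n)*t)):ℂ)))
      = (2*(π:ℂ))^(-s₁-s₂) * Complex.Gamma (s₁+s₂) *
          ((x:ℂ)^(s₁-1) * ((m*x+n : ℝ):ℂ)^(-(s₁+s₂))) := by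
    intro x hx
    have hx0 := hx.1
    have hmxn : 0 < m*x+n := by nlinarith
    have hr : 0 < 2*π*(m*x+n) := by positivity
    have harg : ((2*π*(m*x+n) : ℝ) : ℂ).arg ≠ π := by
      rw [Complex.arg_ofReal_of_nonneg hr.le]
      exact Real.pi_ne_zero.symm
    have key := integral_cpow_mul_exp_neg_mul_Ioi (a := s₁+s₂) hs hr
    have congr1 : (∫ t in Ioi (0:ℝ),
          (t:ℂ)^(s₁+s₂-1) * ((x:ℂ)^(s₁-1) * Complex.exp (↑(-(2*π*(m*x+n)*t)):ℂ)))
        = (x:ℂ)^(s₁-1) * ∫ t in Ioi (0:ℝ),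
          (t:ℂ)^(s₁+s₂-1) * Complex.exp (-(((2*π*(m*x+n) : ℝ):ℂ) * (t:ℂ))) := by
      rw [← MeasureTheory.integral_const_mul]
      refine setIntegral_congr_fun measurableSet_Ioi (fun t ht => ?_)
      rw [show (-(((2*π*(m*x+n) : ℝ):ℂ) * (t:ℂ)) : ℂ) = ↑(-(2*π*(m*x+n)*t)) by push_cast; ring]
      ring
    rw [congr1, key, one_div, inv_cpow _ _ harg, ← cpow_neg, ofReal_mul,
      mul_cpow_ofReal_nonneg pi2.le hmxn.le]
    rw [show (-s₁-s₂ : ℂ) = -(s₁+s₂) by ring]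
    push_cast
    ring
  rw [setIntegral_congr_fun measurableSet_Ioc step3, MeasureTheory.integral_const_mul,
    intervalIntegral.integral_of_le zero_le_one]

lemma integrableOn_exp_cpow {s : ℂ} (hs : 0 < s.re) {μ : ℝ} (hμ : 0 < μ)
    {S : Set ℝ} (hS : MeasurableSet S) (hsub : S ⊆ Set.Ioi 0) :
    IntegrableOn (fun t : ℝ => Complex.exp (↑(-(μ*t)) : ℂ) * (t:ℂ)^(s-1)) S := by
  refine ((integrableOn_cpow_exp hs hμ).mono_set hsub).congr_fun (fun t _ => ?_) hS
  rw [mul_comm]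

lemma setIntegral_norm_exp_cpow_le {s : ℂ} (hs : 0 < s.re) {μ : ℝ} (hμ : 0 < μ)
    {S : Set ℝ} (hS : MeasurableSet S) (hsub : S ⊆ Set.Ioi 0) :
    ∫ t in S, ‖Complex.exp (↑(-(μ*t)) : ℂ) * (t:ℂ)^(s-1)‖ ≤ (1/μ)^s.re * Real.Gamma s.re := by
  have : (∫ t in S, ‖Complex.exp (↑(-(μ*t)) : ℂ) * (t:ℂ)^(s-1)‖)
      = ∫ t in S, ‖(t:ℂ)^(s-1) * Complex.exp (↑(-(μ*t)) : ℂ)‖ :=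
    setIntegral_congr_fun hS (fun t _ => by rw [mul_comm])
  rw [this]
  exact setIntegral_norm_cpow_exp_le hs hμ hS hsub

lemma norm_cexp_ofReal (y : ℝ) : ‖Complex.exp (↑y : ℂ)‖ = rexp y := by
  rw [Complex.norm_exp, ofReal_re]

lemma summable_coeff_inv {C r : ℝ} {a : ℕ → ℂ} (hA : ∀ n : ℕ, ‖a n‖ ≤ C * (n:ℝ)^r)
    {σ : ℝ} (hσ : r + 1 < σ) :
    Summable (fun m : ℕ => ‖a (m+1)‖ * (1/(2*π*((m:ℝ)+1)))^σ) := by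
  have hpi : (0:ℝ) < 2*π := by positivity
  have hs : Summable (fun m : ℕ => (C * (1/(2*π))^σ) * ((m:ℝ)+1)^(r-σ)) := by
    apply Summable.mul_left
    have : Summable (fun m : ℕ => ((m:ℝ))^(r-σ)) := Real.summable_nat_rpow.mpr (by linarith)
    have h2 := (summable_nat_add_iff 1).mpr this
    refine h2.congr (fun m => ?_)
    push_cast
    ring_nf
  refine Summable.of_nonneg_of_le (fun m => by positivity) (fun m => ?_) hs
  have hm1 : (0:ℝ) < (m:ℝ)+1 := by positivity
  have e1 : (1/(2*π*((m:ℝ)+1)))^σ = (1/(2*π))^σ * ((m:ℝ)+1)^(-σ) := by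
    rw [show (1/(2*π*((m:ℝ)+1))) = (1/(2*π)) * (1/((m:ℝ)+1)) by field_simp,
      Real.mul_rpow (by positivity) (by positivity), one_div ((m:ℝ)+1),
      Real.inv_rpow hm1.le, ← Real.rpow_neg hm1.le]
  rw [e1]
  have h2 : ‖a (m+1)‖ ≤ C * ((m:ℝ)+1)^r := by
    have := hA (m+1); push_cast at this ⊢; linarith
  calc ‖a (m+1)‖ * ((1/(2*π))^σ * ((m:ℝ)+1)^(-σ))
      ≤ (C * ((m:ℝ)+1)^r) * ((1/(2*π))^σ * ((m:ℝ)+1)^(-σ)) := by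
        apply mul_le_mul_of_nonneg_right h2 (by positivity)
    _ = (C * (1/(2*π))^σ) * (((m:ℝ)+1)^r * ((m:ℝ)+1)^(-σ)) := by ring
    _ = (C * (1/(2*π))^σ) * ((m:ℝ)+1)^(r-σ) := by
        rw [← Real.rpow_add hm1]; ring_nf

lemma summable_coeff_exp {C r : ℝ} {a : ℕ → ℂ} (hA : ∀ n : ℕ, ‖a n‖ ≤ C * (n:ℝ)^r)
    {t : ℝ} (ht : 0 < t) :
    Summable (fun m : ℕ => ‖a (m+1)‖ * rexp (-(2*π*((m:ℝ)+1)*t))) := by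
  set q : ℝ := rexp (-(2*π*t)) with hq
  have hq1 : q < 1 := by
    rw [hq, Real.exp_lt_one_iff]
    have : (0:ℝ) < 2*π*t := by positivity
    linarith
  have hq0 : 0 < q := Real.exp_pos _
  set K : ℕ := ⌈r⌉₊ + 1 with hK
  have hs : Summable (fun m : ℕ => C * (((m:ℝ)+1)^K * q^(m+1))) := by
    apply Summable.mul_left
    have h0 : Summable (fun j : ℕ => (j:ℝ)^K * q^j) := by
      have : ‖q‖ < 1 := by rwa [Real.norm_eq_abs, abs_of_pos hq0]
      exact summable_pow_mul_geometric_of_norm_lt_one K this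
    have := (summable_nat_add_iff 1).mpr h0
    refine this.congr (fun m => ?_)
    push_cast
    ring
  refine Summable.of_nonneg_of_le (fun m => by positivity) (fun m => ?_) hs
  have hm1 : (1:ℝ) ≤ (m:ℝ)+1 := by push_cast; linarith [Nat.cast_nonneg (α := ℝ) m]
  have h2 : ‖a (m+1)‖ ≤ C * ((m:ℝ)+1)^r := by
    have := hA (m+1); push_cast at this ⊢; linarith
  have h3 : ((m:ℝ)+1)^r ≤ ((m:ℝ)+1)^(K:ℕ) := by
    rw [← Real.rpow_natCast ((m:ℝ)+1) K]
    apply Real.rpow_le_rpow_of_exponent_le hm1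
    calc r ≤ ⌈r⌉₊ := Nat.le_ceil r
      _ ≤ (K:ℝ) := by rw [hK]; push_cast; linarith
  have h4 : rexp (-(2*π*((m:ℝ)+1)*t)) = q^(m+1) := by
    rw [hq, ← Real.exp_nat_mul]
    congr 1
    push_cast
    ring
  rw [h4]
  have hqpow : (0:ℝ) ≤ q^(m+1) := by positivity
  calc ‖a (m+1)‖ * q^(m+1) ≤ (C * ((m:ℝ)+1)^r) * q^(m+1) :=
        mul_le_mul_of_nonneg_right h2 hqpow
    _ ≤ (C * ((m:ℝ)+1)^K) * q^(m+1) := by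
        have : 0 ≤ C := le_trans (norm_nonneg (a 1)) (by simpa using hA 1)
        apply mul_le_mul_of_nonneg_right _ hqpow
        exact mul_le_mul_of_nonneg_left h3 this
    _ = C * (((m:ℝ)+1)^K * q^(m+1)) := by ring

/-- Double Mellin transform of two cuspidal `q`-expansions as a Dirichlet-type
series of hypergeometric integrals: for coefficients `a, b` of polynomial growth
(and vanishing constant terms), for `Re s₁, Re s₂` sufficiently large,
`∫_{0≤t₁≤t₂≤∞} f₁(it₁) f₂(it₂) t₁^{s₁-1} t₂^{s₂-1}
  = (2π)^{-s₁-s₂} Γ(s₁+s₂) ∑_{m,n≥1} a_m b_n ∫₀¹ x^{s₁-1}(mx+n)^{-(s₁+s₂)} dx`. -/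
theorem double_mellin_eq_hypergeometric_series
    (k₁ k₂ : ℕ) (hk₁ : 1 ≤ k₁) (hk₂ : 1 ≤ k₂)
    (a b : ℕ → ℂ)
    (ha : ∃ C r : ℝ, 0 < C ∧ ∀ n : ℕ, ‖a n‖ ≤ C * (n : ℝ) ^ r)
    (hb : ∃ C r : ℝ, 0 < C ∧ ∀ n : ℕ, ‖b n‖ ≤ C * (n : ℝ) ^ r)
    (f₁ f₂ : ℝ → ℂ)
    (hf₁ : ∀ t : ℝ, 0 < t → f₁ t = ∑' m : ℕ, a (m + 1) * Complex.exp (-(2 * π * (m + 1) * t)))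
    (hf₂ : ∀ t : ℝ, 0 < t → f₂ t = ∑' n : ℕ, b (n + 1) * Complex.exp (-(2 * π * (n + 1) * t))) :
    ∃ B : ℝ, ∀ s₁ s₂ : ℂ, B < s₁.re → B < s₂.re →
      (∫ t₂ in Set.Ioi (0 : ℝ),
          (∫ t₁ in Set.Ioc (0 : ℝ) t₂, f₁ t₁ * (t₁ : ℂ) ^ (s₁ - 1)) *
            (f₂ t₂ * (t₂ : ℂ) ^ (s₂ - 1))) =
        (2 * (π : ℂ)) ^ (-s₁ - s₂) * Complex.Gamma (s₁ + s₂) *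
          ∑' p : ℕ × ℕ,
            a (p.1 + 1) * b (p.2 + 1) *
              ∫ x in (0:ℝ)..1,
                (x : ℂ) ^ (s₁ - 1) *
                  ((((p.1 + 1 : ℝ)) * x + ((p.2 + 1 : ℝ)) : ℝ) : ℂ) ^ (-(s₁ + s₂)) := by
  obtain ⟨C₁, r₁, hC₁, hA⟩ := ha
  obtain ⟨C₂, r₂, hC₂, hB⟩ := hb
  refine ⟨max (max (r₁+2) (r₂+2)) 2, ?_⟩
  intro s₁ s₂ hs₁ hs₂
  have hm2 : (2:ℝ) ≤ max (max (r₁+2) (r₂+2)) 2 := le_max_right _ _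
  have hmr₁ : r₁ + 2 ≤ max (max (r₁+2) (r₂+2)) 2 :=
    le_trans (le_max_left _ _) (le_max_left _ _)
  have hmr₂ : r₂ + 2 ≤ max (max (r₁+2) (r₂+2)) 2 :=
    le_trans (le_max_right _ _) (le_max_left _ _)
  have h₁ : 1 < s₁.re := by linarith
  have h₂ : 1 < s₂.re := by linarith
  have h₁0 : 0 < s₁.re := by linarith
  have h₂0 : 0 < s₂.re := by linarith
  have hr₁ : r₁ + 1 < s₁.re := by linarith
  have hr₂ : r₂ + 1 < s₂.re := by linarith
  have hpi : (0:ℝ) < 2*π := by positivity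
  have hμ : ∀ m : ℕ, (0:ℝ) < 2*π*((m:ℝ)+1) := fun m => by positivity
  -- Gamma constants
  set Γ₁ : ℝ := Real.Gamma s₁.re with hΓ₁
  set Γ₂ : ℝ := Real.Gamma s₂.re with hΓ₂
  have hΓ₁0 : 0 ≤ Γ₁ := Real.Gamma_nonneg_of_nonneg h₁0.le
  have hΓ₂0 : 0 ≤ Γ₂ := Real.Gamma_nonneg_of_nonneg h₂0.le
  -- uniform bound for the inner integral
  have hGbound : ∀ (m : ℕ) (T : ℝ),
      ‖∫ t₁ in Ioc (0:ℝ) T, Complex.exp (↑(-(2*π*((m:ℝ)+1)*t₁)) : ℂ) * (t₁:ℂ)^(s₁-1)‖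
        ≤ (1/(2*π*((m:ℝ)+1)))^s₁.re * Γ₁ := by
    intro m T
    rcases le_or_gt T 0 with hT | hT
    · rw [Ioc_eq_empty (by exact fun h => absurd (lt_of_lt_of_le h hT) (lt_irrefl 0))]
      simp only [MeasureTheory.Measure.restrict_empty, MeasureTheory.integral_zero_measure,
        norm_zero]
      positivity
    · refine le_trans (norm_integral_le_integral_norm _) ?_
      exact setIntegral_norm_exp_cpow_le h₁0 (hμ m) measurableSet_Ioc
        (fun x hx => hx.1)
  -- summable coefficient series
  have Sa : Summable (fun m : ℕ => ‖a (m+1)‖ * (1/(2*π*((m:ℝ)+1)))^s₁.re * Γ₁) := by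
    have := (summable_coeff_inv hA hr₁).mul_right Γ₁
    exact this.congr (fun m => by ring)
  have Sb : Summable (fun n : ℕ => ‖b (n+1)‖ * (1/(2*π*((n:ℝ)+1)))^s₂.re * Γ₂) := by
    have := (summable_coeff_inv hB hr₂).mul_right Γ₂
    exact this.congr (fun n => by ring)
  -- Step I : inner integral expansion
  have hinner : ∀ t₂ ∈ Ioi (0:ℝ),
      (∫ t₁ in Ioc (0:ℝ) t₂, f₁ t₁ * (t₁:ℂ)^(s₁-1))
        = ∑' m : ℕ, a (m+1) *
            ∫ t₁ in Ioc (0:ℝ) t₂, Complex.exp (↑(-(2*π*((m:ℝ)+1)*t₁)) : ℂ) * (t₁:ℂ)^(s₁-1) := by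
    intro t₂ ht₂
    rw [mem_Ioi] at ht₂
    have hcongr : ∀ t₁ ∈ Ioc (0:ℝ) t₂, f₁ t₁ * (t₁:ℂ)^(s₁-1)
        = ∑' m : ℕ, a (m+1) * (Complex.exp (↑(-(2*π*((m:ℝ)+1)*t₁)) : ℂ) * (t₁:ℂ)^(s₁-1)) := by
      intro t₁ ht₁
      rw [hf₁ t₁ ht₁.1, ← tsum_mul_right]
      refine tsum_congr (fun m => ?_)
      rw [show (-(2 * (π:ℂ) * ((m:ℂ) + 1) * (t₁:ℂ))) = ↑(-(2*π*((m:ℝ)+1)*t₁)) by push_cast; ring]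
      ring
    rw [setIntegral_congr_fun measurableSet_Ioc hcongr]
    have hInt : ∀ m : ℕ, Integrable
        (fun t₁ => a (m+1) * (Complex.exp (↑(-(2*π*((m:ℝ)+1)*t₁)) : ℂ) * (t₁:ℂ)^(s₁-1)))
        (volume.restrict (Ioc (0:ℝ) t₂)) := by
      intro m
      exact (integrableOn_exp_cpow h₁0 (hμ m) measurableSet_Ioc
        (fun x hx => hx.1)).const_mul _
    have hSum : Summable (fun m : ℕ => ∫ t₁ in Ioc (0:ℝ) t₂,
        ‖a (m+1) * (Complex.exp (↑(-(2*π*((m:ℝ)+1)*t₁)) : ℂ) * (t₁:ℂ)^(s₁-1))‖) := by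
      refine Summable.of_nonneg_of_le (fun m => integral_nonneg (fun t => norm_nonneg _))
        (fun m => ?_) Sa
      calc (∫ t₁ in Ioc (0:ℝ) t₂,
            ‖a (m+1) * (Complex.exp (↑(-(2*π*((m:ℝ)+1)*t₁)) : ℂ) * (t₁:ℂ)^(s₁-1))‖)
          = ‖a (m+1)‖ * ∫ t₁ in Ioc (0:ℝ) t₂,
              ‖Complex.exp (↑(-(2*π*((m:ℝ)+1)*t₁)) : ℂ) * (t₁:ℂ)^(s₁-1)‖ := by
            rw [← MeasureTheory.integral_const_mul]
            exact setIntegral_congr_fun measurableSet_Ioc (fun t _ => by rw [norm_mul])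
        _ ≤ ‖a (m+1)‖ * ((1/(2*π*((m:ℝ)+1)))^s₁.re * Γ₁) := by
            refine mul_le_mul_of_nonneg_left ?_ (norm_nonneg _)
            exact setIntegral_norm_exp_cpow_le h₁0 (hμ m) measurableSet_Ioc (fun x hx => hx.1)
        _ = ‖a (m+1)‖ * (1/(2*π*((m:ℝ)+1)))^s₁.re * Γ₁ := by ring
    rw [← MeasureTheory.integral_tsum_of_summable_integral_norm hInt hSum]
    exact tsum_congr (fun m => MeasureTheory.integral_const_mul _ _)
  -- Step II : pointwise product expansion into double series
  have houter : ∀ t₂ ∈ Ioi (0:ℝ),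
      (∫ t₁ in Ioc (0:ℝ) t₂, f₁ t₁ * (t₁:ℂ)^(s₁-1)) * (f₂ t₂ * (t₂:ℂ)^(s₂-1))
        = ∑' p : ℕ × ℕ,
            (a (p.1+1) * ∫ t₁ in Ioc (0:ℝ) t₂,
              Complex.exp (↑(-(2*π*((p.1:ℝ)+1)*t₁)) : ℂ) * (t₁:ℂ)^(s₁-1)) *
            (b (p.2+1) * (Complex.exp (↑(-(2*π*((p.2:ℝ)+1)*t₂)) : ℂ) * (t₂:ℂ)^(s₂-1))) := by
    intro t₂ ht₂
    have ht₂' : 0 < t₂ := ht₂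
    rw [hinner t₂ ht₂]
    have hf2' : f₂ t₂ * (t₂:ℂ)^(s₂-1) = ∑' n : ℕ,
        b (n+1) * (Complex.exp (↑(-(2*π*((n:ℝ)+1)*t₂)) : ℂ) * (t₂:ℂ)^(s₂-1)) := by
      rw [hf₂ t₂ ht₂', ← tsum_mul_right]
      refine tsum_congr (fun n => ?_)
      rw [show (-(2 * (π:ℂ) * ((n:ℂ) + 1) * (t₂:ℂ))) = ↑(-(2*π*((n:ℝ)+1)*t₂)) by push_cast; ring]
      ring
    rw [hf2']
    refine tsum_mul_tsum_of_summable_norm ?_ ?_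
    · refine Summable.of_nonneg_of_le (fun m => norm_nonneg _) (fun m => ?_) Sa
      rw [norm_mul]
      calc ‖a (m+1)‖ * ‖∫ t₁ in Ioc (0:ℝ) t₂,
            Complex.exp (↑(-(2*π*((m:ℝ)+1)*t₁)) : ℂ) * (t₁:ℂ)^(s₁-1)‖
          ≤ ‖a (m+1)‖ * ((1/(2*π*((m:ℝ)+1)))^s₁.re * Γ₁) :=
            mul_le_mul_of_nonneg_left (hGbound m t₂) (norm_nonneg _)
        _ = ‖a (m+1)‖ * (1/(2*π*((m:ℝ)+1)))^s₁.re * Γ₁ := by ring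
    · have hS : Summable (fun n : ℕ =>
          (‖b (n+1)‖ * rexp (-(2*π*((n:ℝ)+1)*t₂))) * t₂^(s₂.re-1)) :=
        (summable_coeff_exp hB ht₂').mul_right _
      refine hS.congr (fun n => ?_)
      rw [norm_mul, norm_mul, norm_cexp_ofReal, 
        norm_cpow_eq_rpow_re_of_pos ht₂', sub_re, one_re]
      ring
  rw [setIntegral_congr_fun measurableSet_Ioi houter]
  -- Step III : swap tsum and integral
  have hcontw : ∀ (w : ℂ), 1 < w.re → ∀ (μ : ℝ),
      Continuous (fun t : ℝ => Complex.exp (↑(-(μ*t)) : ℂ) * (t:ℂ)^(w-1)) := by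
    intro w hw μ
    exact (Complex.continuous_exp.comp (Complex.continuous_ofReal.comp (by fun_prop))).mul
      (Complex.continuous_ofReal_cpow_const (by rw [sub_re, one_re]; linarith))
  have hGmeas : ∀ m : ℕ, AEStronglyMeasurable
      (fun T : ℝ => ∫ t₁ in Ioc (0:ℝ) T,
        Complex.exp (↑(-(2*π*((m:ℝ)+1)*t₁)) : ℂ) * (t₁:ℂ)^(s₁-1))
      (volume.restrict (Ioi (0:ℝ))) := by
    intro m
    have hc := hcontw s₁ h₁ (2*π*((m:ℝ)+1))
    have hprim : Continuous (fun T : ℝ => ∫ t₁ in (0:ℝ)..T,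
        Complex.exp (↑(-(2*π*((m:ℝ)+1)*t₁)) : ℂ) * (t₁:ℂ)^(s₁-1)) :=
      intervalIntegral.continuous_primitive (fun a b => hc.intervalIntegrable a b) 0
    refine hprim.aestronglyMeasurable.congr ?_
    filter_upwards [ae_restrict_mem measurableSet_Ioi] with T hT
    exact intervalIntegral.integral_of_le (le_of_lt hT)
  have hPInt : ∀ p : ℕ × ℕ, Integrable (fun t₂ : ℝ =>
      (a (p.1+1) * ∫ t₁ in Ioc (0:ℝ) t₂,
        Complex.exp (↑(-(2*π*((p.1:ℝ)+1)*t₁)) : ℂ) * (t₁:ℂ)^(s₁-1)) *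
      (b (p.2+1) * (Complex.exp (↑(-(2*π*((p.2:ℝ)+1)*t₂)) : ℂ) * (t₂:ℂ)^(s₂-1))))
      (volume.restrict (Ioi (0:ℝ))) := by
    intro p
    have hmeas := ((hGmeas p.1).const_mul (a (p.1+1))).mul
      ((((hcontw s₂ h₂ (2*π*((p.2:ℝ)+1))).aestronglyMeasurable).const_mul (b (p.2+1))) :
        AEStronglyMeasurable _ (volume.restrict (Ioi (0:ℝ))))
    refine Integrable.mono' ((integrableOn_rpow_exp h₂0 (hμ p.2)).const_mul
      (‖a (p.1+1)‖ * ((1/(2*π*((p.1:ℝ)+1)))^s₁.re * Γ₁) * ‖b (p.2+1)‖)) hmeas ?_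
    filter_upwards [ae_restrict_mem measurableSet_Ioi] with t ht
    rw [norm_mul, norm_mul, norm_mul, norm_mul, norm_cexp_ofReal,
      norm_cpow_eq_rpow_re_of_pos ht, sub_re, one_re]
    have h5 := hGbound p.1 t
    have hrp : (0:ℝ) ≤ rexp (-(2*π*((p.2:ℝ)+1)*t)) * t^(s₂.re-1) :=
      mul_nonneg (Real.exp_nonneg _) (Real.rpow_nonneg (le_of_lt ht) _)
    calc ‖a (p.1+1)‖ * ‖∫ t₁ in Ioc (0:ℝ) t,
          Complex.exp (↑(-(2*π*((p.1:ℝ)+1)*t₁)) : ℂ) * (t₁:ℂ)^(s₁-1)‖ *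
          (‖b (p.2+1)‖ * (rexp (-(2*π*((p.2:ℝ)+1)*t)) * t^(s₂.re-1)))
        ≤ ‖a (p.1+1)‖ * ((1/(2*π*((p.1:ℝ)+1)))^s₁.re * Γ₁) *
          (‖b (p.2+1)‖ * (rexp (-(2*π*((p.2:ℝ)+1)*t)) * t^(s₂.re-1))) := by
          refine mul_le_mul_of_nonneg_right ?_ (mul_nonneg (norm_nonneg _) hrp)
          exact mul_le_mul_of_nonneg_left h5 (norm_nonneg _)
      _ = ‖a (p.1+1)‖ * ((1/(2*π*((p.1:ℝ)+1)))^s₁.re * Γ₁) * ‖b (p.2+1)‖ *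
          (t^(s₂.re-1) * rexp (-(2*π*((p.2:ℝ)+1)*t))) := by ring
  have hPSum : Summable (fun p : ℕ × ℕ => ∫ t₂ in Ioi (0:ℝ),
      ‖(a (p.1+1) * ∫ t₁ in Ioc (0:ℝ) t₂,
        Complex.exp (↑(-(2*π*((p.1:ℝ)+1)*t₁)) : ℂ) * (t₁:ℂ)^(s₁-1)) *
      (b (p.2+1) * (Complex.exp (↑(-(2*π*((p.2:ℝ)+1)*t₂)) : ℂ) * (t₂:ℂ)^(s₂-1)))‖) := by
    refine Summable.of_nonneg_of_le (fun p => integral_nonneg fun t => norm_nonneg _)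
      (fun p => ?_) (Sa.mul_of_nonneg Sb (fun m => by positivity) (fun n => by positivity))
    have hBint : IntegrableOn (fun t₂ : ℝ =>
        b (p.2+1) * (Complex.exp (↑(-(2*π*((p.2:ℝ)+1)*t₂)) : ℂ) * (t₂:ℂ)^(s₂-1)))
        (Ioi (0:ℝ)) :=
      (integrableOn_exp_cpow h₂0 (hμ p.2) measurableSet_Ioi (subset_refl _)).const_mul _
    calc (∫ t₂ in Ioi (0:ℝ),
        ‖(a (p.1+1) * ∫ t₁ in Ioc (0:ℝ) t₂,
          Complex.exp (↑(-(2*π*((p.1:ℝ)+1)*t₁)) : ℂ) * (t₁:ℂ)^(s₁-1)) *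
        (b (p.2+1) * (Complex.exp (↑(-(2*π*((p.2:ℝ)+1)*t₂)) : ℂ) * (t₂:ℂ)^(s₂-1)))‖)
        ≤ ∫ t₂ in Ioi (0:ℝ), (‖a (p.1+1)‖ * ((1/(2*π*((p.1:ℝ)+1)))^s₁.re * Γ₁)) *
            ‖b (p.2+1) * (Complex.exp (↑(-(2*π*((p.2:ℝ)+1)*t₂)) : ℂ) * (t₂:ℂ)^(s₂-1))‖ := by
          refine setIntegral_mono_on (hPInt p).norm (hBint.norm.const_mul _)
            measurableSet_Ioi (fun t ht => ?_)
          rw [norm_mul]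
          refine mul_le_mul_of_nonneg_right ?_ (norm_nonneg _)
          rw [norm_mul]
          exact mul_le_mul_of_nonneg_left (hGbound p.1 t) (norm_nonneg _)
      _ = (‖a (p.1+1)‖ * ((1/(2*π*((p.1:ℝ)+1)))^s₁.re * Γ₁)) * (‖b (p.2+1)‖ *
            ∫ t₂ in Ioi (0:ℝ),
            ‖Complex.exp (↑(-(2*π*((p.2:ℝ)+1)*t₂)) : ℂ) * (t₂:ℂ)^(s₂-1)‖) := by
          rw [MeasureTheory.integral_const_mul]
          congr 1
          rw [← MeasureTheory.integral_const_mul]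
          exact setIntegral_congr_fun measurableSet_Ioi (fun t _ => by rw [norm_mul])
      _ ≤ (‖a (p.1+1)‖ * ((1/(2*π*((p.1:ℝ)+1)))^s₁.re * Γ₁)) * (‖b (p.2+1)‖ *
            ((1/(2*π*((p.2:ℝ)+1)))^s₂.re * Γ₂)) := by
          refine mul_le_mul_of_nonneg_left ?_ (by positivity)
          refine mul_le_mul_of_nonneg_left ?_ (norm_nonneg _)
          exact setIntegral_norm_exp_cpow_le h₂0 (hμ p.2) measurableSet_Ioi (subset_refl _)
      _ = (‖a (p.1+1)‖ * (1/(2*π*((p.1:ℝ)+1)))^s₁.re * Γ₁) *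
            (‖b (p.2+1)‖ * (1/(2*π*((p.2:ℝ)+1)))^s₂.re * Γ₂) := by ring
  rw [← MeasureTheory.integral_tsum_of_summable_integral_norm hPInt hPSum]
  -- Step IV : per-pair evaluation
  have hper : ∀ p : ℕ × ℕ,
      (∫ t₂ in Ioi (0:ℝ),
        (a (p.1+1) * ∫ t₁ in Ioc (0:ℝ) t₂,
          Complex.exp (↑(-(2*π*((p.1:ℝ)+1)*t₁)) : ℂ) * (t₁:ℂ)^(s₁-1)) *
        (b (p.2+1) * (Complex.exp (↑(-(2*π*((p.2:ℝ)+1)*t₂)) : ℂ) * (t₂:ℂ)^(s₂-1))))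
      = (2*(π:ℂ))^(-s₁-s₂) * Complex.Gamma (s₁+s₂) *
          (a (p.1+1) * b (p.2+1) *
            ∫ x in (0:ℝ)..1, (x:ℂ)^(s₁-1) * ((((p.1:ℝ)+1)*x+((p.2:ℝ)+1) : ℝ):ℂ)^(-(s₁+s₂))) := by
    intro p
    have e1 : (∫ t₂ in Ioi (0:ℝ),
        (a (p.1+1) * ∫ t₁ in Ioc (0:ℝ) t₂,
          Complex.exp (↑(-(2*π*((p.1:ℝ)+1)*t₁)) : ℂ) * (t₁:ℂ)^(s₁-1)) *
        (b (p.2+1) * (Complex.exp (↑(-(2*π*((p.2:ℝ)+1)*t₂)) : ℂ) * (t₂:ℂ)^(s₂-1))))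
        = (a (p.1+1) * b (p.2+1)) * ∫ t₂ in Ioi (0:ℝ),
          (∫ t₁ in Ioc (0:ℝ) t₂,
            Complex.exp (↑(-(2*π*((p.1:ℝ)+1)*t₁)) : ℂ) * (t₁:ℂ)^(s₁-1)) *
          (Complex.exp (↑(-(2*π*((p.2:ℝ)+1)*t₂)) : ℂ) * (t₂:ℂ)^(s₂-1)) := by
      rw [← MeasureTheory.integral_const_mul]
      exact setIntegral_congr_fun measurableSet_Ioi (fun t _ => by ring)
    rw [e1, per_term h₁ h₂ (by positivity : (0:ℝ) < (p.1:ℝ)+1) (by positivity : (0:ℝ) < (p.2:ℝ)+1)]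
    ring
  rw [tsum_congr hper, tsum_mul_left]
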